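/- Over any field F, the 2×2 polynomial matrices D_1(z) = [[1,0],[1,z]], D_2(z) = [[1,0],[0,z]], D_3(z) = [[z,0],[0,1]] are pairwise left coprime, but the 4×6 block matrix [[D_1, D_2, 0],[0, D_2, D_3]] has rank less than 4 at z = 0, so D_1, D_2, D_3 are not mutually left coprime. -/

import Mathlib

open Polynomial

open Matrix in
private lemma rank_fc_two {K : Type*} [Field K] (A B B₁ B₂ : Matrix (Fin 2) (Fin 2) K)
    (h : A * B₁ + B * B₂ = 1) : (fromCols A B).rank = 2 := by
  refine le_antisymm (by simpa using (fromCols A B).rank_le_card_height) ?_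
  have h1 : fromCols A B * fromRows B₁ B₂ = 1 := by
    rw [fromCols_mul_fromRows, h]
  calc (2 : ℕ) = (1 : Matrix (Fin 2) (Fin 2) K).rank := by simp [Matrix.rank_one]
    _ = (fromCols A B * fromRows B₁ B₂).rank := by rw [h1]
    _ ≤ _ := Matrix.rank_mul_le_left _ _

open Matrix in
private lemma rank_N_le {K : Type*} [Field K] :
    (Matrix.fromBlocks !![(1:K),0;1,0] (fromCols !![(1:K),0;0,0] 0) 0
      (fromCols !![(1:K),0;0,0] !![(0:K),0;0,1])).rank ≤ 3 := by
  have hfac : Matrix.fromBlocks !![(1:K),0;1,0] (fromCols !![(1:K),0;0,0] 0) 0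
      (fromCols !![(1:K),0;0,0] !![(0:K),0;0,1]) =
      (fromRows !![(1:K),1,0;1,0,0] !![(0:K),1,0;0,0,1]) *
      (fromCols !![(1:K),0;0,0;0,0]
        (fromCols !![(0:K),0;1,0;0,0] !![(0:K),0;0,0;0,1])) := by
    ext i j
    rcases i with i | i <;> rcases j with j | j | j <;>
      fin_cases i <;> fin_cases j <;>
      simp [Matrix.mul_apply, Fin.sum_univ_three, Matrix.fromBlocks, Matrix.fromCols,
        Matrix.fromRows_apply_inl, Matrix.fromRows_apply_inr, Matrix.vecHead, Matrix.vecTail]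
  rw [hfac]
  exact (Matrix.rank_mul_le_right _ _).trans ((Matrix.rank_le_card_height _).trans_eq (Fintype.card_fin 3))

/-- Over any field `F`, the matrices `D₁ = [[1,0],[1,z]]`, `D₂ = [[1,0],[0,z]]`,
`D₃ = [[z,0],[0,1]]` are pairwise left coprime, but the staircase block matrix
`[[D₁, D₂, 0],[0, D₂, D₃]]` has rank less than `4` at `z = 0`; hence `D₁, D₂, D₃` are
not mutually left coprime. -/
theorem stmt17 (F : Type*) [Field F] :
    let D₁ : Matrix (Fin 2) (Fin 2) (Polynomial F) := !![1, 0; 1, X]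
    let D₂ : Matrix (Fin 2) (Fin 2) (Polynomial F) := !![1, 0; 0, X]
    let D₃ : Matrix (Fin 2) (Fin 2) (Polynomial F) := !![X, 0; 0, 1]
    let M : Matrix (Fin 2 ⊕ Fin 2) (Fin 2 ⊕ (Fin 2 ⊕ Fin 2)) (Polynomial F) :=
      Matrix.fromBlocks D₁ (Matrix.fromCols D₂ 0) 0 (Matrix.fromCols D₂ D₃)
    (∀ z : AlgebraicClosure F,
        (Matrix.fromCols (D₁.map (aeval z)) (D₂.map (aeval z))).rank = 2) ∧
    (∀ z : AlgebraicClosure F,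
        (Matrix.fromCols (D₁.map (aeval z)) (D₃.map (aeval z))).rank = 2) ∧
    (∀ z : AlgebraicClosure F,
        (Matrix.fromCols (D₂.map (aeval z)) (D₃.map (aeval z))).rank = 2) ∧
    (M.map (Polynomial.eval (0 : F))).rank < 4 ∧
    ¬ (∀ z : AlgebraicClosure F, (M.map (aeval z)).rank = 4) := by
  intro D₁ D₂ D₃ M
  have hD₁ : ∀ z : AlgebraicClosure F, D₁.map (aeval z) = !![1, 0; 1, z] := by
    intro z; ext i j; fin_cases i <;> fin_cases j <;> simp [D₁]
  have hD₂ : ∀ z : AlgebraicClosure F, D₂.map (aeval z) = !![1, 0; 0, z] := by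
    intro z; ext i j; fin_cases i <;> fin_cases j <;> simp [D₂]
  have hD₃ : ∀ z : AlgebraicClosure F, D₃.map (aeval z) = !![z, 0; 0, 1] := by
    intro z; ext i j; fin_cases i <;> fin_cases j <;> simp [D₃]
  refine ⟨?_, ?_, ?_, ?_, ?_⟩
  · intro z
    rw [hD₁ z, hD₂ z]
    rcases eq_or_ne z 0 with hz | hz
    · subst hz
      refine rank_fc_two _ _ !![0, 1; 0, 0] !![1, -1; 0, 0] ?_
      simp [Matrix.mul_fin_two, Matrix.one_fin_two]
    · refine rank_fc_two _ _ !![1, 0; -z⁻¹, z⁻¹] 0 ?_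
      simp [Matrix.mul_fin_two, Matrix.one_fin_two, mul_inv_cancel₀ hz]
  · intro z
    rw [hD₁ z, hD₃ z]
    rcases eq_or_ne z 0 with hz | hz
    · subst hz
      refine rank_fc_two _ _ !![1, 0; 0, 0] !![0, 0; -1, 1] ?_
      simp [Matrix.mul_fin_two, Matrix.one_fin_two]
    · refine rank_fc_two _ _ !![1, 0; -z⁻¹, z⁻¹] 0 ?_
      simp [Matrix.mul_fin_two, Matrix.one_fin_two, mul_inv_cancel₀ hz]
  · intro z
    rw [hD₂ z, hD₃ z]
    refine rank_fc_two _ _ !![1, 0; 0, 0] !![0, 0; 0, 1] ?_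
    simp [Matrix.mul_fin_two, Matrix.one_fin_two]
  · have hM : M.map (Polynomial.eval (0 : F)) =
        Matrix.fromBlocks !![(1:F),0;1,0] (Matrix.fromCols !![(1:F),0;0,0] 0) 0
          (Matrix.fromCols !![(1:F),0;0,0] !![(0:F),0;0,1]) := by
      ext i j
      rcases i with i | i <;> rcases j with j | j | j <;>
        fin_cases i <;> fin_cases j <;>
        simp [M, D₁, D₂, D₃, Matrix.fromBlocks, Matrix.fromCols, Matrix.vecHead, Matrix.vecTail]
    rw [hM]
    exact lt_of_le_of_lt rank_N_le (by norm_num)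
  · intro h
    have h0 := h 0
    have hM : M.map (aeval (0 : AlgebraicClosure F)) =
        Matrix.fromBlocks !![(1:AlgebraicClosure F),0;1,0]
          (Matrix.fromCols !![(1:AlgebraicClosure F),0;0,0] 0) 0
          (Matrix.fromCols !![(1:AlgebraicClosure F),0;0,0]
            !![(0:AlgebraicClosure F),0;0,1]) := by
      ext i j
      rcases i with i | i <;> rcases j with j | j | j <;>
        fin_cases i <;> fin_cases j <;>
        simp [M, D₁, D₂, D₃, Matrix.fromBlocks, Matrix.fromCols, Matrix.vecHead, Matrix.vecTail]
    rw [hM] at h0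
    have := rank_N_le (K := AlgebraicClosure F)
    omega
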